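/- For row vectors v(1),...,v(2k) in a k-dimensional vector space over a field, and any fixed subset A* of {2,4,...,2k}, the sum over all balanced partitions (A,B) of {1,2,...,2k} into two sets of size k with A ∩ {2,4,...,2k} = A* of det(A)·det(B) equals det({1,3,...,2k-1})·det({2,4,...,2k}), where det(S) for a k-element set S = {s_1 < s_2 < ... < s_k} denotes the determinant of the k×k matrix whose i-th row is v(s_i). -/

import Mathlib

open Finset

/-- `ddet v S` : the determinant of the `k × k` matrix whose `i`-th row is
`v sᵢ`, where `s₁ < s₂ < ... < s_k` are the elements of `S` (and `0` if
`S` does not have exactly `k` elements). -/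
noncomputable def ddet {F : Type*} [Field F] {k : ℕ} (v : ℕ → Fin k → F)
    (S : Finset ℕ) : F :=
  if h : S.card = k then
    Matrix.det (Matrix.of fun i j : Fin k => v (S.orderEmbOfFin h i) j)
  else 0

set_option linter.unusedSectionVars false
set_option linter.unusedVariables false
set_option maxHeartbeats 1000000

namespace PSaux

variable {F : Type*} [Field F] {k : ℕ}

theorem ddet_pos {v : ℕ → Fin k → F} {S : Finset ℕ} (h : S.card = k) :
    ddet v S = Matrix.det (Matrix.of fun i j : Fin k => v (S.orderEmbOfFin h i) j) :=
  dif_pos h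

theorem ddet_congr {u u' : ℕ → Fin k → F} {S : Finset ℕ}
    (h : ∀ s ∈ S, u s = u' s) : ddet u S = ddet u' S := by
  unfold ddet
  by_cases hc : S.card = k
  · rw [dif_pos hc, dif_pos hc]
    congr 1
    ext i j
    exact congrFun (h _ (S.orderEmbOfFin_mem hc i)) j
  · rw [dif_neg hc, dif_neg hc]

theorem exists_orderEmb_eq {S : Finset ℕ} (h : S.card = k) {s : ℕ} (hs : s ∈ S) :
    ∃ p : Fin k, S.orderEmbOfFin h p = s := by
  have : s ∈ Set.range (S.orderEmbOfFin h) := by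
    rw [Finset.range_orderEmbOfFin]; exact_mod_cast hs
  exact this

-- update lemmas

theorem matrix_update {u : ℕ → Fin k → F} {S : Finset ℕ} (h : S.card = k) {s : ℕ}
    {p : Fin k} (hp : S.orderEmbOfFin h p = s) (z : Fin k → F) :
    (Matrix.of fun i j : Fin k => (Function.update u s z) (S.orderEmbOfFin h i) j) =
      (Matrix.of fun i j : Fin k => u (S.orderEmbOfFin h i) j).updateRow p z := by
  ext i j
  rcases eq_or_ne i p with rfl | hip
  · rw [Matrix.updateRow_self]
    simp only [Matrix.of_apply, hp, Function.update_self]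
  · rw [Matrix.updateRow_ne hip]
    have : S.orderEmbOfFin h i ≠ s := by
      intro hh; exact hip ((S.orderEmbOfFin h).injective (hh.trans hp.symm))
    simp only [Matrix.of_apply, Function.update_of_ne this]

theorem ddet_update_not_mem {u : ℕ → Fin k → F} {S : Finset ℕ} {s : ℕ} (hs : s ∉ S)
    (z : Fin k → F) : ddet (Function.update u s z) S = ddet u S :=
  ddet_congr fun t ht => Function.update_of_ne (fun h => hs (by rwa [← h])) _ _

theorem ddet_update_add {u : ℕ → Fin k → F} {S : Finset ℕ} (h : S.card = k) {s : ℕ}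
    (hs : s ∈ S) (a b : Fin k → F) :
    ddet (Function.update u s (a + b)) S
      = ddet (Function.update u s a) S + ddet (Function.update u s b) S := by
  obtain ⟨p, hp⟩ := exists_orderEmb_eq h hs
  rw [ddet_pos h, ddet_pos h, ddet_pos h, matrix_update h hp, matrix_update h hp,
    matrix_update h hp, Matrix.det_updateRow_add]

theorem ddet_update_smul {u : ℕ → Fin k → F} {S : Finset ℕ} (h : S.card = k) {s : ℕ}
    (hs : s ∈ S) (c : F) (a : Fin k → F) :
    ddet (Function.update u s (c • a)) S = c * ddet (Function.update u s a) S := by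
  obtain ⟨p, hp⟩ := exists_orderEmb_eq h hs
  rw [ddet_pos h, ddet_pos h, matrix_update h hp, matrix_update h hp,
    Matrix.det_updateRow_smul]

-- the setting

def II (k : ℕ) : Finset ℕ := Finset.Icc 1 (2*k)
def EE (k : ℕ) : Finset ℕ := (II k).filter (fun x => Even x)
def OO (k : ℕ) : Finset ℕ := (II k).filter (fun x => Odd x)
def coll (k : ℕ) (Astar : Finset ℕ) : Finset (Finset ℕ) :=
  (II k).powerset.filter (fun A => A.card = k ∧ A ∩ EE k = Astar)

def idx (hk : 0 < k) (n : ℕ) : Fin k := ⟨(n-1)/2 % k, Nat.mod_lt _ hk⟩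

noncomputable def wfun (hk : 0 < k) (x y : Fin k → Fin k → F) : ℕ → Fin k → F :=
  fun n => if Odd n then x (idx hk n) else y (idx hk n)

noncomputable def bigSum (u : ℕ → Fin k → F) (Astar : Finset ℕ) : F :=
  ∑ A ∈ coll k Astar, ddet u A * ddet u (II k \ A)

theorem mem_II {n : ℕ} : n ∈ II k ↔ 1 ≤ n ∧ n ≤ 2*k := Finset.mem_Icc

theorem card_II : (II k).card = 2*k := by simp [II]

theorem coll_spec {Astar A : Finset ℕ} (hA : A ∈ coll k Astar) :
    A ⊆ II k ∧ A.card = k ∧ A ∩ EE k = Astar := by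
  rw [coll, Finset.mem_filter, Finset.mem_powerset] at hA
  exact ⟨hA.1, hA.2.1, hA.2.2⟩

theorem coll_mem {Astar A : Finset ℕ} (hsub : A ⊆ II k) (hcard : A.card = k)
    (hint : A ∩ EE k = Astar) : A ∈ coll k Astar := by
  rw [coll, Finset.mem_filter, Finset.mem_powerset]
  exact ⟨hsub, hcard, hint⟩

theorem card_compl {A : Finset ℕ} (hsub : A ⊆ II k) (hcard : A.card = k) :
    (II k \ A).card = k := by
  rw [Finset.card_sdiff_of_subset hsub, card_II, hcard]
  omega

theorem idx_odd (hk : 0 < k) (i : Fin k) : idx hk (2*(i:ℕ)+1) = i := by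
  apply Fin.ext
  show (2*(i:ℕ)+1-1)/2 % k = i
  have h1 : (2*(i:ℕ)+1-1)/2 = i := by omega
  rw [h1, Nat.mod_eq_of_lt i.isLt]

theorem idx_even (hk : 0 < k) (i : Fin k) : idx hk (2*(i:ℕ)+2) = i := by
  apply Fin.ext
  show (2*(i:ℕ)+2-1)/2 % k = i
  have h1 : (2*(i:ℕ)+2-1)/2 = i := by omega
  rw [h1, Nat.mod_eq_of_lt i.isLt]

theorem odd_form (hk : 0 < k) {n : ℕ} (hn : n ∈ II k) (ho : Odd n) :
    n = 2*((idx hk n : ℕ)) + 1 := by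
  rw [mem_II] at hn
  rw [Nat.odd_iff] at ho
  show n = 2 * ((n-1)/2 % k) + 1
  have h2 : (n-1)/2 < k := by omega
  rw [Nat.mod_eq_of_lt h2]
  omega

theorem even_form (hk : 0 < k) {n : ℕ} (hn : n ∈ II k) (he : Even n) :
    n = 2*((idx hk n : ℕ)) + 2 := by
  rw [mem_II] at hn
  rw [Nat.even_iff] at he
  show n = 2 * ((n-1)/2 % k) + 2
  have h2 : (n-1)/2 < k := by omega
  rw [Nat.mod_eq_of_lt h2]
  omega

theorem wfun_odd (hk : 0 < k) (x y : Fin k → Fin k → F) {n : ℕ} (ho : Odd n) :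
    wfun hk x y n = x (idx hk n) := if_pos ho

theorem wfun_even (hk : 0 < k) (x y : Fin k → Fin k → F) {n : ℕ} (he : Even n) :
    wfun hk x y n = y (idx hk n) := if_neg (by rw [Nat.odd_iff, Nat.even_iff] at *; omega)

theorem wfun_update_x (hk : 0 < k) (x y : Fin k → Fin k → F) (i : Fin k) (z : Fin k → F)
    {n : ℕ} (hn : n ∈ II k) :
    wfun hk (Function.update x i z) y n
      = Function.update (wfun hk x y) (2*(i:ℕ)+1) z n := by
  by_cases ho : Odd n
  · by_cases hni : n = 2*(i:ℕ)+1
    · subst hni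
      rw [Function.update_self, wfun_odd hk _ y ho, idx_odd, Function.update_self]
    · have hidx : idx hk n ≠ i := by
        intro hh
        apply hni
        rw [odd_form hk hn ho, hh]
      rw [Function.update_of_ne hni, wfun_odd hk _ y ho, wfun_odd hk x y ho,
        Function.update_of_ne hidx]
  · have hni : n ≠ 2*(i:ℕ)+1 := by
      intro hh
      apply ho
      rw [Nat.odd_iff]; omega
    have he : Even n := Nat.not_odd_iff_even.mp ho
    rw [Function.update_of_ne hni, wfun_even hk _ y he, wfun_even hk x y he]

theorem wfun_update_y (hk : 0 < k) (x y : Fin k → Fin k → F) (i : Fin k) (z : Fin k → F)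
    {n : ℕ} (hn : n ∈ II k) :
    wfun hk x (Function.update y i z) n
      = Function.update (wfun hk x y) (2*(i:ℕ)+2) z n := by
  by_cases ho : Odd n
  · have hni : n ≠ 2*(i:ℕ)+2 := by
      intro hh
      rw [Nat.odd_iff] at ho; omega
    rw [Function.update_of_ne hni, wfun_odd hk x _ ho, wfun_odd hk x y ho]
  · have he : Even n := Nat.not_odd_iff_even.mp ho
    by_cases hni : n = 2*(i:ℕ)+2
    · subst hni
      rw [Function.update_self, wfun_even hk x _ he, idx_even, Function.update_self]
    · have hidx : idx hk n ≠ i := by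
        intro hh
        apply hni
        rw [even_form hk hn he, hh]
      rw [Function.update_of_ne hni, wfun_even hk x _ he, wfun_even hk x y he,
        Function.update_of_ne hidx]

theorem bigSum_congr {Astar : Finset ℕ} {u u' : ℕ → Fin k → F}
    (h : ∀ n ∈ II k, u n = u' n) : bigSum u Astar = bigSum u' Astar := by
  refine Finset.sum_congr rfl fun A hA => ?_
  have hsub := (coll_spec hA).1
  rw [ddet_congr (fun s hs => h s (hsub hs)),
    ddet_congr (fun s hs => h s (Finset.mem_sdiff.mp hs).1)]

theorem bigSum_update_add {Astar : Finset ℕ} {u : ℕ → Fin k → F} {o : ℕ}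
    (ho : o ∈ II k) (a b : Fin k → F) :
    bigSum (Function.update u o (a + b)) Astar
      = bigSum (Function.update u o a) Astar + bigSum (Function.update u o b) Astar := by
  rw [bigSum, bigSum, bigSum, ← Finset.sum_add_distrib]
  refine Finset.sum_congr rfl fun A hA => ?_
  obtain ⟨hsub, hcard, -⟩ := coll_spec hA
  by_cases hoA : o ∈ A
  · have hoB : o ∉ II k \ A := fun hh => (Finset.mem_sdiff.mp hh).2 hoA
    rw [ddet_update_add hcard hoA, ddet_update_not_mem hoB, ddet_update_not_mem hoB,
      ddet_update_not_mem hoB, add_mul]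
  · have hoB : o ∈ II k \ A := Finset.mem_sdiff.mpr ⟨ho, hoA⟩
    rw [ddet_update_add (card_compl hsub hcard) hoB, ddet_update_not_mem hoA,
      ddet_update_not_mem hoA, ddet_update_not_mem hoA, mul_add]

theorem bigSum_update_smul {Astar : Finset ℕ} {u : ℕ → Fin k → F} {o : ℕ}
    (ho : o ∈ II k) (c : F) (a : Fin k → F) :
    bigSum (Function.update u o (c • a)) Astar
      = c * bigSum (Function.update u o a) Astar := by
  rw [bigSum, bigSum, Finset.mul_sum]
  refine Finset.sum_congr rfl fun A hA => ?_
  obtain ⟨hsub, hcard, -⟩ := coll_spec hA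
  by_cases hoA : o ∈ A
  · have hoB : o ∉ II k \ A := fun hh => (Finset.mem_sdiff.mp hh).2 hoA
    rw [ddet_update_smul hcard hoA, ddet_update_not_mem hoB, ddet_update_not_mem hoB,
      mul_assoc]
  · have hoB : o ∈ II k \ A := Finset.mem_sdiff.mpr ⟨ho, hoA⟩
    rw [ddet_update_smul (card_compl hsub hcard) hoB, ddet_update_not_mem hoA,
      ddet_update_not_mem hoA]
    ring

theorem ddet_eq_zero_of_eq {u : ℕ → Fin k → F} {S : Finset ℕ} {s t : ℕ}
    (hs : s ∈ S) (ht : t ∈ S) (hst : s ≠ t) (hu : u s = u t) : ddet u S = 0 := by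
  unfold ddet
  by_cases hc : S.card = k
  · rw [dif_pos hc]
    obtain ⟨p, hp⟩ := exists_orderEmb_eq hc hs
    obtain ⟨q, hq⟩ := exists_orderEmb_eq hc ht
    have hpq : p ≠ q := by
      intro h; apply hst; rw [← hp, ← hq, h]
    apply Matrix.det_zero_of_row_eq hpq
    funext j
    simp only [Matrix.of_apply, hp, hq]
    rw [hu]
  · rw [dif_neg hc]

theorem card_replace {S : Finset ℕ} (h : S.card = k) {s t : ℕ} (hs : s ∈ S) (ht : t ∉ S) :
    (insert t (S.erase s)).card = k := by
  rw [Finset.card_insert_of_notMem (fun hmem => ht (Finset.mem_of_mem_erase hmem)),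
    Finset.card_erase_of_mem hs, h]
  have : 0 < k := h ▸ Finset.card_pos.2 ⟨s, hs⟩
  omega

theorem ddet_replace0 {u : ℕ → Fin k → F} {S : Finset ℕ} (h : S.card = k) {s t : ℕ}
    (hs : s ∈ S) (ht : t ∉ S)
    (hb : ∀ w ∈ S, ¬(min s t < w ∧ w < max s t)) (hu : u s = u t) :
    ddet u (insert t (S.erase s)) = ddet u S := by
  have h' : (insert t (S.erase s)).card = k := card_replace h hs ht
  have hst : s ≠ t := fun hst => ht (hst ▸ hs)
  set e := S.orderEmbOfFin h with he
  set f : Fin k → ℕ := fun i => if e i = s then t else e i with hf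
  have hmem : ∀ i, f i ∈ insert t (S.erase s) := by
    intro i
    by_cases hes : e i = s
    · simp [hf, hes]
    · simp only [hf, if_neg hes]
      exact Finset.mem_insert_of_mem (Finset.mem_erase.2 ⟨hes, S.orderEmbOfFin_mem h i⟩)
  have hmono : StrictMono f := by
    intro i j hij
    have hlt : e i < e j := (S.orderEmbOfFin h).strictMono hij
    have hi := S.orderEmbOfFin_mem h i
    have hj := S.orderEmbOfFin_mem h j
    have hti : e i ≠ t := fun hh => ht (hh ▸ hi)
    have htj : e j ≠ t := fun hh => ht (hh ▸ hj)
    by_cases hes : e i = s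
    · have hjs : e j ≠ s := by
        intro hh
        omega
      have hbj := hb (e j) hj
      simp only [hf, if_pos hes, if_neg hjs]
      omega
    · by_cases hjs : e j = s
      · have hbi := hb (e i) hi
        simp only [hf, if_neg hes, if_pos hjs]
        omega
      · simpa [hf, if_neg hes, if_neg hjs] using hlt
  have hfe : f = (insert t (S.erase s)).orderEmbOfFin h' :=
    Finset.orderEmbOfFin_unique h' hmem hmono
  rw [ddet_pos h', ddet_pos h]
  congr 1
  ext i j
  simp only [Matrix.of_apply, ← hfe]
  by_cases hes : e i = s
  · simp only [hf, if_pos hes, ← hu, hes]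
    rw [← hes]
  · simp [hf, if_neg hes]
    rfl

theorem ddet_replace1 {u : ℕ → Fin k → F} {S : Finset ℕ} (h : S.card = k) {s t w : ℕ}
    (hs : s ∈ S) (ht : t ∉ S) (hw : w ∈ S)
    (hw1 : min s t < w ∧ w < max s t)
    (hb : ∀ z ∈ S, (min s t < z ∧ z < max s t) → z = w) (hu : u s = u t) :
    ddet u (insert t (S.erase s)) = - ddet u S := by
  have h' : (insert t (S.erase s)).card = k := card_replace h hs ht
  have hst : s ≠ t := fun hst => ht (hst ▸ hs)
  have hws : w ≠ s := by omega
  have hwt : w ≠ t := fun hh => ht (hh ▸ hw)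
  set e := S.orderEmbOfFin h with he
  set g : Fin k → ℕ := fun i => if e i = s then w else if e i = w then t else e i with hg
  have hmem : ∀ i, g i ∈ insert t (S.erase s) := by
    intro i
    by_cases hes : e i = s
    · simp only [hg, if_pos hes]
      exact Finset.mem_insert_of_mem (Finset.mem_erase.2 ⟨hws, hw⟩)
    · by_cases hew : e i = w
      · simp only [hg, if_neg hes, if_pos hew]
        exact Finset.mem_insert_self _ _
      · simp only [hg, if_neg hes, if_neg hew]
        exact Finset.mem_insert_of_mem (Finset.mem_erase.2 ⟨hes, S.orderEmbOfFin_mem h i⟩)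
  have hmono : StrictMono g := by
    intro i j hij
    have hlt : e i < e j := (S.orderEmbOfFin h).strictMono hij
    have hi := S.orderEmbOfFin_mem h i
    have hj := S.orderEmbOfFin_mem h j
    have hti : e i ≠ t := fun hh => ht (hh ▸ hi)
    have htj : e j ≠ t := fun hh => ht (hh ▸ hj)
    have hbi := hb (e i) hi
    have hbj := hb (e j) hj
    have hinj : e i ≠ e j := ne_of_lt hlt
    simp only [hg]
    split_ifs with h1 h2 h3 h4 h5 h6 h7 h8 <;> omega
  have hfe : g = (insert t (S.erase s)).orderEmbOfFin h' :=
    Finset.orderEmbOfFin_unique h' hmem hmono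
  obtain ⟨p, hp⟩ := exists_orderEmb_eq h hs
  obtain ⟨q, hq⟩ := exists_orderEmb_eq h hw
  have hpq : p ≠ q := by
    intro hh; rw [hh, hq] at hp; exact hws hp
  rw [ddet_pos h', ddet_pos h]
  have hrow : (Matrix.of fun i j : Fin k =>
      u ((insert t (S.erase s)).orderEmbOfFin h' i) j) =
      (Matrix.of fun i j : Fin k => u (e i) j).submatrix (Equiv.swap p q) id := by
    ext i j
    simp only [Matrix.of_apply, Matrix.submatrix_apply, id, ← hfe]
    rcases eq_or_ne i p with rfl | hip
    · rw [Equiv.swap_apply_left]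
      simp only [hg, if_pos hp, hq]
      rw [if_pos (show e i = s from hp)]
      exact congrArg (fun r => u r j) hq.symm
    · rcases eq_or_ne i q with rfl | hiq
      · rw [Equiv.swap_apply_right]
        have heis : e i ≠ s := by rw [hq]; exact hws
        simp only [hg, if_neg heis, if_pos hq, hp, ← hu]
        rw [if_pos (show e i = w from hq), ← hu]
        exact congrArg (fun r => u r j) hp.symm
      · rw [Equiv.swap_apply_of_ne_of_ne hip hiq]
        have h1 : e i ≠ s := fun hh => hip (((S.orderEmbOfFin h).injective (hh.trans hp.symm)))
        have h2 : e i ≠ w := fun hh => hiq (((S.orderEmbOfFin h).injective (hh.trans hq.symm)))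
        simp only [hg, if_neg h1, if_neg h2]
  rw [hrow, Matrix.det_permute, Equiv.Perm.sign_swap hpq]
  simp
  rfl


theorem mem_EE {n : ℕ} : n ∈ EE k ↔ n ∈ II k ∧ Even n := Finset.mem_filter

theorem mem_OO {n : ℕ} : n ∈ OO k ↔ n ∈ II k ∧ Odd n := Finset.mem_filter

theorem bigSum_def (u : ℕ → Fin k → F) (Astar : Finset ℕ) :
    bigSum u Astar = ∑ A ∈ coll k Astar, ddet u A * ddet u (II k \ A) := rfl

theorem coll_swap {Astar A : Finset ℕ} (hA : A ∈ coll k Astar) {a b : ℕ}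
    (ha : a ∈ A) (hb : b ∉ A) (haO : Odd a) (hbO : Odd b) (hbII : b ∈ II k) :
    insert b (A.erase a) ∈ coll k Astar := by
  obtain ⟨hsub, hcard, hint⟩ := coll_spec hA
  refine coll_mem ?_ (card_replace hcard ha hb) ?_
  · exact Finset.insert_subset hbII ((Finset.erase_subset _ _).trans hsub)
  · rw [← hint]
    ext n
    simp only [Finset.mem_inter, Finset.mem_insert, Finset.mem_erase, mem_EE]
    constructor
    · rintro ⟨h1 | ⟨h2, h3⟩, h4⟩
      · exfalso; subst h1; rw [Nat.odd_iff] at hbO; rw [Nat.even_iff] at h4; omega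
      · exact ⟨h3, h4⟩
    · rintro ⟨h1, h2⟩
      have hna : n ≠ a := by
        intro hh; subst hh; rw [Nat.odd_iff] at haO; rw [Nat.even_iff] at h2; omega
      exact ⟨Or.inr ⟨hna, h1⟩, h2⟩

theorem compl_swap {A : Finset ℕ} (hsub : A ⊆ II k) {a b : ℕ} (ha : a ∈ A) (hb : b ∉ A)
    (haI : a ∈ II k) (hbI : b ∈ II k) :
    II k \ insert b (A.erase a) = insert a ((II k \ A).erase b) := by
  have hab : a ≠ b := fun h => hb (h ▸ ha)
  ext n
  simp only [Finset.mem_sdiff, Finset.mem_insert, Finset.mem_erase]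
  constructor
  · rintro ⟨hnI, hn⟩
    by_cases hna : n = a
    · exact Or.inl hna
    · refine Or.inr ⟨?_, hnI, ?_⟩ <;> tauto
  · rintro (rfl | ⟨hnb, hnI, hnA⟩)
    · exact ⟨haI, by tauto⟩
    · exact ⟨hnI, by tauto⟩

theorem swap_term {Astar : Finset ℕ} {u : ℕ → Fin k → F} {i : ℕ} (hik : i + 1 < k)
    (hu : u (2*i+1) = u (2*i+3)) {A : Finset ℕ} (hA : A ∈ coll k Astar)
    (ho : 2*i+1 ∈ A) (ho' : 2*i+3 ∉ A) :
    ddet u (insert (2*i+3) (A.erase (2*i+1)))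
        * ddet u (II k \ insert (2*i+3) (A.erase (2*i+1)))
      = -(ddet u A * ddet u (II k \ A)) := by
  obtain ⟨hsub, hcard, hint⟩ := coll_spec hA
  have hoI : (2*i+1) ∈ II k := mem_II.mpr ⟨by omega, by omega⟩
  have ho'I : (2*i+3) ∈ II k := mem_II.mpr ⟨by omega, by omega⟩
  have hmidI : (2*i+2) ∈ II k := mem_II.mpr ⟨by omega, by omega⟩
  have hBcard := card_compl hsub hcard
  have ho'B : (2*i+3) ∈ II k \ A := Finset.mem_sdiff.mpr ⟨ho'I, ho'⟩
  have hoB : (2*i+1) ∉ II k \ A := fun hh => (Finset.mem_sdiff.mp hh).2 ho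
  have hcompl := compl_swap hsub ho ho' hoI ho'I
  by_cases hmid : (2*i+2) ∈ A
  · have h1 : ddet u (insert (2*i+3) (A.erase (2*i+1))) = - ddet u A :=
      ddet_replace1 hcard ho ho' hmid (by omega)
        (fun z _ hz => by omega) hu
    have h2 : ddet u (insert (2*i+1) ((II k \ A).erase (2*i+3))) = ddet u (II k \ A) :=
      ddet_replace0 hBcard ho'B hoB
        (fun z hz hbz => by
          have hzA : z ∉ A := (Finset.mem_sdiff.mp hz).2
          have : z = 2*i+2 := by omega
          exact hzA (this ▸ hmid)) hu.symm
    rw [hcompl, h1, h2]; ring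
  · have hmidB : (2*i+2) ∈ II k \ A := Finset.mem_sdiff.mpr ⟨hmidI, hmid⟩
    have h1 : ddet u (insert (2*i+3) (A.erase (2*i+1))) = ddet u A :=
      ddet_replace0 hcard ho ho'
        (fun z hz hbz => by
          have : z = 2*i+2 := by omega
          exact hmid (this ▸ hz)) hu
    have h2 : ddet u (insert (2*i+1) ((II k \ A).erase (2*i+3))) = - ddet u (II k \ A) :=
      ddet_replace1 hBcard ho'B hoB hmidB (by omega)
        (fun z _ hz => by omega) hu.symm
    rw [hcompl, h1, h2]; ring

theorem bigSum_adjacent_zero {Astar : Finset ℕ} {u : ℕ → Fin k → F} {i : ℕ}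
    (hik : i + 1 < k) (hu : u (2*i+1) = u (2*i+3)) : bigSum u Astar = 0 := by
  classical
  rw [bigSum_def]
  have hoI : (2*i+1) ∈ II k := mem_II.mpr ⟨by omega, by omega⟩
  have ho'I : (2*i+3) ∈ II k := mem_II.mpr ⟨by omega, by omega⟩
  have hoO : Odd (2*i+1) := Nat.odd_iff.mpr (by omega)
  have ho'O : Odd (2*i+3) := Nat.odd_iff.mpr (by omega)
  have hne : (2*i+1) ≠ (2*i+3) := by omega
  refine Finset.sum_involution
    (fun A _ => if (2*i+1 ∈ A ∧ 2*i+3 ∈ A) ∨ (2*i+1 ∉ A ∧ 2*i+3 ∉ A) then A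
      else if 2*i+1 ∈ A then insert (2*i+3) (A.erase (2*i+1))
      else insert (2*i+1) (A.erase (2*i+3))) ?_ ?_ ?_ ?_
  · -- sums cancel
    intro A hA
    by_cases hc : (2*i+1 ∈ A ∧ 2*i+3 ∈ A) ∨ (2*i+1 ∉ A ∧ 2*i+3 ∉ A)
    · rw [if_pos hc]
      have hz : ddet u A * ddet u (II k \ A) = 0 := by
        rcases hc with ⟨h1, h2⟩ | ⟨h1, h2⟩
        · rw [ddet_eq_zero_of_eq h1 h2 hne hu, zero_mul]
        · rw [ddet_eq_zero_of_eq (Finset.mem_sdiff.mpr ⟨hoI, h1⟩)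
            (Finset.mem_sdiff.mpr ⟨ho'I, h2⟩) hne hu, mul_zero]
      rw [hz]; ring
    · rw [if_neg hc]
      by_cases ho : 2*i+1 ∈ A
      · have ho' : 2*i+3 ∉ A := by tauto
        rw [if_pos ho, swap_term hik hu hA ho ho']; ring
      · have ho' : 2*i+3 ∈ A := by tauto
        rw [if_neg ho]
        set A' := insert (2*i+1) (A.erase (2*i+3)) with hA'def
        have hA' : A' ∈ coll k Astar := coll_swap hA ho' ho ho'O hoO hoI
        have hmem1 : 2*i+1 ∈ A' := Finset.mem_insert_self _ _
        have hmem2 : 2*i+3 ∉ A' := by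
          rw [hA'def, Finset.mem_insert]
          push_neg
          exact ⟨hne.symm, Finset.notMem_erase _ _⟩
        have hst := swap_term hik hu hA' hmem1 hmem2
        have hback : insert (2*i+3) (A'.erase (2*i+1)) = A := by
          rw [hA'def, Finset.erase_insert, Finset.insert_erase ho']
          intro hh
          exact ho (Finset.mem_of_mem_erase hh)
        rw [hback] at hst
        rw [hst]; ring
  · -- g_ne
    intro A hA hfA
    by_cases hc : (2*i+1 ∈ A ∧ 2*i+3 ∈ A) ∨ (2*i+1 ∉ A ∧ 2*i+3 ∉ A)
    · exfalso
      apply hfA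
      rcases hc with ⟨h1, h2⟩ | ⟨h1, h2⟩
      · rw [ddet_eq_zero_of_eq h1 h2 hne hu, zero_mul]
      · rw [ddet_eq_zero_of_eq (Finset.mem_sdiff.mpr ⟨hoI, h1⟩)
          (Finset.mem_sdiff.mpr ⟨ho'I, h2⟩) hne hu, mul_zero]
    · rw [if_neg hc]
      by_cases ho : 2*i+1 ∈ A
      · rw [if_pos ho]
        intro hh
        have : 2*i+1 ∈ insert (2*i+3) (A.erase (2*i+1)) := hh.symm ▸ ho
        rw [Finset.mem_insert] at this
        rcases this with h1 | h1
        · exact hne h1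
        · exact (Finset.notMem_erase _ _) h1
      · rw [if_neg ho]
        have ho' : 2*i+3 ∈ A := by tauto
        intro hh
        have : 2*i+3 ∈ insert (2*i+1) (A.erase (2*i+3)) := hh.symm ▸ ho'
        rw [Finset.mem_insert] at this
        rcases this with h1 | h1
        · exact hne h1.symm
        · exact (Finset.notMem_erase _ _) h1
  · -- g_mem
    intro A hA
    by_cases hc : (2*i+1 ∈ A ∧ 2*i+3 ∈ A) ∨ (2*i+1 ∉ A ∧ 2*i+3 ∉ A)
    · rw [if_pos hc]; exact hA
    · rw [if_neg hc]
      by_cases ho : 2*i+1 ∈ A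
      · rw [if_pos ho]
        exact coll_swap hA ho (by tauto) hoO ho'O ho'I
      · rw [if_neg ho]
        exact coll_swap hA (by tauto) ho ho'O hoO hoI
  · -- g_inv
    intro A hA
    by_cases hc : (2*i+1 ∈ A ∧ 2*i+3 ∈ A) ∨ (2*i+1 ∉ A ∧ 2*i+3 ∉ A)
    · simp only [if_pos hc]
    · rw [if_neg hc]
      by_cases ho : 2*i+1 ∈ A
      · have ho' : 2*i+3 ∉ A := by tauto
        rw [if_pos ho]
        have hm1 : 2*i+3 ∈ insert (2*i+3) (A.erase (2*i+1)) := Finset.mem_insert_self _ _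
        have hm2 : 2*i+1 ∉ insert (2*i+3) (A.erase (2*i+1)) := by
          rw [Finset.mem_insert]
          push_neg
          exact ⟨hne, Finset.notMem_erase _ _⟩
        rw [if_neg (by tauto), if_neg hm2, Finset.erase_insert
          (fun hh => ho' (Finset.mem_of_mem_erase hh)), Finset.insert_erase ho]
      · have ho' : 2*i+3 ∈ A := by tauto
        rw [if_neg ho]
        have hm1 : 2*i+1 ∈ insert (2*i+1) (A.erase (2*i+3)) := Finset.mem_insert_self _ _
        have hm2 : 2*i+3 ∉ insert (2*i+1) (A.erase (2*i+3)) := by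
          rw [Finset.mem_insert]
          push_neg
          exact ⟨hne.symm, Finset.notMem_erase _ _⟩
        rw [if_neg (by tauto), if_pos hm1, Finset.erase_insert
          (fun hh => ho (Finset.mem_of_mem_erase hh)), Finset.insert_erase ho']

noncomputable def PhiML (hk : 0 < k) (y : Fin k → Fin k → F) (Astar : Finset ℕ) :
    MultilinearMap F (fun _ : Fin k => (Fin k → F)) F where
  toFun x := bigSum (wfun hk x y) Astar
  map_update_add' {dec} x i a b := by
    rw [Subsingleton.elim dec (instDecidableEqFin k)]
    have hoI : 2*(i:ℕ)+1 ∈ II k := mem_II.mpr ⟨by omega, by have := i.isLt; omega⟩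
    rw [bigSum_congr (fun n hn => wfun_update_x hk x y i (a+b) hn),
        bigSum_congr (fun n hn => wfun_update_x hk x y i a hn),
        bigSum_congr (fun n hn => wfun_update_x hk x y i b hn),
        bigSum_update_add hoI a b]
  map_update_smul' {dec} x i c a := by
    rw [Subsingleton.elim dec (instDecidableEqFin k)]
    have hoI : 2*(i:ℕ)+1 ∈ II k := mem_II.mpr ⟨by omega, by have := i.isLt; omega⟩
    rw [bigSum_congr (fun n hn => wfun_update_x hk x y i (c • a) hn),
        bigSum_congr (fun n hn => wfun_update_x hk x y i a hn),
        bigSum_update_smul hoI c a, smul_eq_mul]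

theorem PhiML_apply (hk : 0 < k) (y : Fin k → Fin k → F) (Astar : Finset ℕ)
    (x : Fin k → Fin k → F) : PhiML hk y Astar x = bigSum (wfun hk x y) Astar := rfl

theorem PhiML_adjacent (hk : 0 < k) (y : Fin k → Fin k → F) (Astar : Finset ℕ)
    (x : Fin k → Fin k → F) {i j : Fin k} (hij : (j:ℕ) = (i:ℕ) + 1)
    (hx : x i = x j) : PhiML hk y Astar x = 0 := by
  have hik : (i:ℕ) + 1 < k := by have := j.isLt; omega
  show bigSum (wfun hk x y) Astar = 0
  refine bigSum_adjacent_zero hik ?_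
  have h1 : wfun hk x y (2*(i:ℕ)+1) = x i := by
    rw [wfun_odd hk x y (Nat.odd_iff.mpr (by omega)), idx_odd hk i]
  have h2 : wfun hk x y (2*(i:ℕ)+3) = x j := by
    rw [wfun_odd hk x y (Nat.odd_iff.mpr (by omega))]
    have h3 : 2*(i:ℕ)+3 = 2*(j:ℕ)+1 := by omega
    rw [h3, idx_odd hk j]
  rw [h1, h2, hx]

theorem PhiML_swap_adjacent (hk : 0 < k) (y : Fin k → Fin k → F) (Astar : Finset ℕ)
    (x : Fin k → Fin k → F) {i j : Fin k} (hij : (j:ℕ) = (i:ℕ) + 1) (a b : Fin k → F) :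
    PhiML hk y Astar (Function.update (Function.update x i a) j b)
      = - PhiML hk y Astar (Function.update (Function.update x i b) j a) := by
  classical
  set f := PhiML hk y Astar with hf
  have hij' : i ≠ j := by
    intro hh
    rw [hh] at hij
    omega
  have adj : ∀ c d : Fin k → F,
      Function.update (Function.update x i c) j d i = c →
      Function.update (Function.update x i c) j d j = d →
      True := fun _ _ _ _ => trivial
  have key : f (Function.update (Function.update x i (a+b)) j (a+b)) = 0 := by
    apply PhiML_adjacent hk y Astar _ hij
    rw [Function.update_self, Function.update_of_ne hij', Function.update_self]
  rw [f.map_update_add, Function.update_comm hij' (a+b) a x,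
    Function.update_comm hij' (a+b) b x, f.map_update_add, f.map_update_add,
    Function.update_comm hij'.symm a a x, Function.update_comm hij'.symm b a x,
    Function.update_comm hij'.symm a b x, Function.update_comm hij'.symm b b x] at key
  have haa : f (Function.update (Function.update x i a) j a) = 0 := by
    apply PhiML_adjacent hk y Astar _ hij
    rw [Function.update_self, Function.update_of_ne hij', Function.update_self]
  have hbb : f (Function.update (Function.update x i b) j b) = 0 := by
    apply PhiML_adjacent hk y Astar _ hij
    rw [Function.update_self, Function.update_of_ne hij', Function.update_self]
  rw [haa, hbb] at key
  linear_combination key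

theorem PhiML_eq_zero_of_eq (hk : 0 < k) (y : Fin k → Fin k → F) (Astar : Finset ℕ) :
    ∀ (d : ℕ) (x : Fin k → Fin k → F) (i j : Fin k), (j:ℕ) = (i:ℕ) + d + 1 → x i = x j →
      PhiML hk y Astar x = 0 := by
  intro d
  induction d with
  | zero =>
    intro x i j hij hx
    exact PhiML_adjacent hk y Astar x (by omega) hx
  | succ d ih =>
    intro x i j hij hx
    classical
    have hjk := j.isLt
    set l : Fin k := ⟨(i:ℕ)+d+1, by omega⟩ with hldef
    have hlv : (l:ℕ) = (i:ℕ)+d+1 := rfl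
    have hlj : (j:ℕ) = (l:ℕ) + 1 := by omega
    have hil : i ≠ l := by
      intro hh
      have : (i:ℕ) = (l:ℕ) := congrArg Fin.val hh
      omega
    have hij' : i ≠ j := by
      intro hh
      have : (i:ℕ) = (j:ℕ) := congrArg Fin.val hh
      omega
    have hlj' : l ≠ j := by
      intro hh
      have : (l:ℕ) = (j:ℕ) := congrArg Fin.val hh
      omega
    set x' := Function.update (Function.update x l (x j)) j (x l) with hx'
    have h1 : PhiML hk y Astar x' = - PhiML hk y Astar x := by
      have hsw := PhiML_swap_adjacent hk y Astar x hlj (x j) (x l)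
      rw [hx']
      rw [hsw, Function.update_eq_self, Function.update_eq_self]
    have h2 : PhiML hk y Astar x' = 0 := by
      apply ih x' i l (by omega)
      have e1 : x' i = x i := by
        rw [hx', Function.update_of_ne hij', Function.update_of_ne hil]
      have e2 : x' l = x j := by
        rw [hx', Function.update_of_ne hlj', Function.update_self]
      rw [e1, e2]
      exact hx
    rw [h1] at h2
    exact neg_eq_zero.mp h2

noncomputable def PhiAlt (hk : 0 < k) (y : Fin k → Fin k → F) (Astar : Finset ℕ) :
    (Fin k → F) [⋀^Fin k]→ₗ[F] F where
  toMultilinearMap := PhiML hk y Astar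
  map_eq_zero_of_eq' x i j hx hij := by
    rcases lt_or_gt_of_ne hij with h | h
    · exact PhiML_eq_zero_of_eq hk y Astar ((j:ℕ) - (i:ℕ) - 1) x i j (by
        have : (i:ℕ) < (j:ℕ) := h
        omega) hx
    · exact PhiML_eq_zero_of_eq hk y Astar ((i:ℕ) - (j:ℕ) - 1) x j i (by
        have : (j:ℕ) < (i:ℕ) := h
        omega) hx.symm

theorem stage1 (hk : 0 < k) (y : Fin k → Fin k → F) (Astar : Finset ℕ)
    (x : Fin k → Fin k → F) :
    bigSum (wfun hk x y) Astar
      = bigSum (wfun hk (fun i => Pi.single i 1) y) Astar * (Matrix.of x).det := by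
  classical
  have h := congrFun (congrArg DFunLike.coe
    ((PhiAlt hk y Astar).eq_smul_basis_det (Pi.basisFun F (Fin k)))) x
  simp only [AlternatingMap.smul_apply, smul_eq_mul] at h
  have h1 : (PhiAlt hk y Astar) x = bigSum (wfun hk x y) Astar := rfl
  have h2 : (PhiAlt hk y Astar) (⇑(Pi.basisFun F (Fin k)))
      = bigSum (wfun hk (fun i => Pi.single i 1) y) Astar := by
    have : ⇑(Pi.basisFun F (Fin k)) = fun i : Fin k => (Pi.single i 1 : Fin k → F) := by
      funext i
      exact Pi.basisFun_apply F (Fin k) i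
    rw [this]
    rfl
  have h3 : (Pi.basisFun F (Fin k)).det x = (Matrix.of x).det := by
    rw [Pi.basisFun_det]
    rfl
  rw [h1, h2, h3] at h
  exact h

/-- the canonical transversal of the pairs, given `Astar` -/
def pairF (k : ℕ) (Astar : Finset ℕ) : Fin k → ℕ :=
  fun i => if 2*(i:ℕ)+2 ∈ Astar then 2*(i:ℕ)+2 else 2*(i:ℕ)+1

/-- its complement -/
def pairG (k : ℕ) (Astar : Finset ℕ) : Fin k → ℕ :=
  fun i => if 2*(i:ℕ)+2 ∈ Astar then 2*(i:ℕ)+1 else 2*(i:ℕ)+2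

theorem pairF_mono {Astar : Finset ℕ} : StrictMono (pairF k Astar) := by
  intro i j hij
  have : (i:ℕ) < (j:ℕ) := hij
  unfold pairF
  split_ifs <;> omega

theorem pairG_mono {Astar : Finset ℕ} : StrictMono (pairG k Astar) := by
  intro i j hij
  have : (i:ℕ) < (j:ℕ) := hij
  unfold pairG
  split_ifs <;> omega

theorem card_image_pairF {Astar : Finset ℕ} :
    (Finset.image (pairF k Astar) Finset.univ).card = k := by
  rw [Finset.card_image_of_injective _ pairF_mono.injective, card_univ, Fintype.card_fin]

theorem card_image_pairG {Astar : Finset ℕ} :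
    (Finset.image (pairG k Astar) Finset.univ).card = k := by
  rw [Finset.card_image_of_injective _ pairG_mono.injective, card_univ, Fintype.card_fin]

theorem mem_image_pairF {Astar : Finset ℕ} {n : ℕ} :
    n ∈ Finset.image (pairF k Astar) Finset.univ
      ↔ n ∈ II k ∧ ((Even n ∧ n ∈ Astar) ∨ (Odd n ∧ n+1 ∉ Astar)) := by
  rw [Finset.mem_image]
  constructor
  · rintro ⟨i, -, rfl⟩
    have hik := i.isLt
    unfold pairF
    by_cases h : 2*(i:ℕ)+2 ∈ Astar
    · rw [if_pos h]
      exact ⟨mem_II.mpr ⟨by omega, by omega⟩, Or.inl ⟨by rw [Nat.even_iff]; omega, h⟩⟩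
    · rw [if_neg h]
      refine ⟨mem_II.mpr ⟨by omega, by omega⟩, Or.inr ⟨by rw [Nat.odd_iff]; omega, ?_⟩⟩
      simpa using h
  · rintro ⟨hnI, ⟨he, hA⟩ | ⟨ho, hA⟩⟩
    · rw [mem_II] at hnI
      rw [Nat.even_iff] at he
      refine ⟨⟨n/2 - 1, by omega⟩, Finset.mem_univ _, ?_⟩
      have h2 : 2*((⟨n/2-1, by omega⟩ : Fin k):ℕ)+2 = n := by simp; omega
      unfold pairF
      rw [h2, if_pos hA]
    · rw [mem_II] at hnI
      rw [Nat.odd_iff] at ho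
      refine ⟨⟨(n-1)/2, by omega⟩, Finset.mem_univ _, ?_⟩
      have h2 : 2*((⟨(n-1)/2, by omega⟩ : Fin k):ℕ)+2 = n+1 := by simp; omega
      have h3 : 2*((⟨(n-1)/2, by omega⟩ : Fin k):ℕ)+1 = n := by simp; omega
      unfold pairF
      rw [h2, h3, if_neg hA]

theorem mem_image_pairG {Astar : Finset ℕ} {n : ℕ} :
    n ∈ Finset.image (pairG k Astar) Finset.univ
      ↔ n ∈ II k ∧ ((Even n ∧ n ∉ Astar) ∨ (Odd n ∧ n+1 ∈ Astar)) := by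
  rw [Finset.mem_image]
  constructor
  · rintro ⟨i, -, rfl⟩
    have hik := i.isLt
    unfold pairG
    by_cases h : 2*(i:ℕ)+2 ∈ Astar
    · rw [if_pos h]
      exact ⟨mem_II.mpr ⟨by omega, by omega⟩, Or.inr ⟨by rw [Nat.odd_iff]; omega, by simpa using h⟩⟩
    · rw [if_neg h]
      exact ⟨mem_II.mpr ⟨by omega, by omega⟩, Or.inl ⟨by rw [Nat.even_iff]; omega, h⟩⟩
  · rintro ⟨hnI, ⟨he, hA⟩ | ⟨ho, hA⟩⟩
    · rw [mem_II] at hnI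
      rw [Nat.even_iff] at he
      refine ⟨⟨n/2 - 1, by omega⟩, Finset.mem_univ _, ?_⟩
      have h2 : 2*((⟨n/2-1, by omega⟩ : Fin k):ℕ)+2 = n := by simp; omega
      unfold pairG
      rw [h2, if_neg hA]
    · rw [mem_II] at hnI
      rw [Nat.odd_iff] at ho
      refine ⟨⟨(n-1)/2, by omega⟩, Finset.mem_univ _, ?_⟩
      have h2 : 2*((⟨(n-1)/2, by omega⟩ : Fin k):ℕ)+2 = n+1 := by simp; omega
      have h3 : 2*((⟨(n-1)/2, by omega⟩ : Fin k):ℕ)+1 = n := by simp; omega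
      unfold pairG
      rw [h2, h3, if_pos hA]

theorem pairD_subset {Astar : Finset ℕ} : Finset.image (pairF k Astar) Finset.univ ⊆ II k :=
  fun n hn => (mem_image_pairF.mp hn).1

theorem compl_pairD {Astar : Finset ℕ} :
    II k \ Finset.image (pairF k Astar) Finset.univ
      = Finset.image (pairG k Astar) Finset.univ := by
  ext n
  rw [Finset.mem_sdiff, mem_image_pairG, mem_image_pairF]
  by_cases hE : Even n
  · have hO : ¬ Odd n := by rw [Nat.even_iff] at hE; rw [Nat.odd_iff]; omega
    tauto
  · have hO : Odd n := by rw [Nat.even_iff] at hE; rw [Nat.odd_iff]; omega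
    tauto

theorem pairD_coll {Astar : Finset ℕ} (hAstar : Astar ⊆ EE k) :
    Finset.image (pairF k Astar) Finset.univ ∈ coll k Astar := by
  refine coll_mem pairD_subset card_image_pairF ?_
  ext n
  rw [Finset.mem_inter, mem_image_pairF, mem_EE]
  constructor
  · rintro ⟨⟨h1, ⟨he, hA⟩ | ⟨ho, hA⟩⟩, h2, h3⟩
    · exact hA
    · exfalso; rw [Nat.even_iff] at h3; rw [Nat.odd_iff] at ho; omega
  · intro hA
    have h2 := hAstar hA
    rw [mem_EE] at h2
    exact ⟨⟨h2.1, Or.inl ⟨h2.2, hA⟩⟩, h2.1, h2.2⟩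

theorem ddet_pairD {Astar : Finset ℕ} (hk : 0 < k) (y : Fin k → Fin k → F) :
    ddet (wfun hk y y) (Finset.image (pairF k Astar) Finset.univ) = (Matrix.of y).det := by
  rw [ddet_pos card_image_pairF]
  congr 1
  have hemb : ∀ i, (Finset.image (pairF k Astar) Finset.univ).orderEmbOfFin
      card_image_pairF i = pairF k Astar i := by
    intro i
    rw [← Finset.orderEmbOfFin_unique card_image_pairF
      (fun i => Finset.mem_image_of_mem _ (Finset.mem_univ i)) pairF_mono]
  ext i j
  rw [Matrix.of_apply, hemb i]
  unfold pairF
  by_cases h : 2*(i:ℕ)+2 ∈ Astar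
  · rw [if_pos h, wfun_even hk y y (by rw [Nat.even_iff]; omega), idx_even hk i]
    rfl
  · rw [if_neg h, wfun_odd hk y y (by rw [Nat.odd_iff]; omega), idx_odd hk i]
    rfl

theorem ddet_pairDc {Astar : Finset ℕ} (hk : 0 < k) (y : Fin k → Fin k → F) :
    ddet (wfun hk y y) (II k \ Finset.image (pairF k Astar) Finset.univ)
      = (Matrix.of y).det := by
  rw [compl_pairD, ddet_pos card_image_pairG]
  congr 1
  have hemb : ∀ i, (Finset.image (pairG k Astar) Finset.univ).orderEmbOfFin
      card_image_pairG i = pairG k Astar i := by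
    intro i
    rw [← Finset.orderEmbOfFin_unique card_image_pairG
      (fun i => Finset.mem_image_of_mem _ (Finset.mem_univ i)) pairG_mono]
  ext i j
  rw [Matrix.of_apply, hemb i]
  unfold pairG
  by_cases h : 2*(i:ℕ)+2 ∈ Astar
  · rw [if_pos h, wfun_odd hk y y (by rw [Nat.odd_iff]; omega), idx_odd hk i]
    rfl
  · rw [if_neg h, wfun_even hk y y (by rw [Nat.even_iff]; omega), idx_even hk i]
    rfl

theorem key1 {Astar : Finset ℕ} (hk : 0 < k) (hAstar : Astar ⊆ EE k)
    (y : Fin k → Fin k → F) :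
    bigSum (wfun hk y y) Astar = (Matrix.of y).det * (Matrix.of y).det := by
  rw [bigSum_def]
  rw [Finset.sum_eq_single_of_mem _ (pairD_coll hAstar)]
  · rw [ddet_pairD hk y, ddet_pairDc hk y]
  · intro A hA hne
    obtain ⟨hsub, hcard, hint⟩ := coll_spec hA
    have hpair : ¬ ∀ i : Fin k, (2*(i:ℕ)+1 ∈ A ↔ 2*(i:ℕ)+2 ∉ A) := by
      intro hall
      apply hne
      ext n
      rw [mem_image_pairF]
      constructor
      · intro hnA
        have hnI : n ∈ II k := hsub hnA
        refine ⟨hnI, ?_⟩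
        by_cases hE : Even n
        · left
          refine ⟨hE, ?_⟩
          rw [← hint, Finset.mem_inter, mem_EE]
          exact ⟨hnA, hnI, hE⟩
        · right
          have hO : Odd n := by
            rw [Nat.even_iff] at hE; rw [Nat.odd_iff]; omega
          refine ⟨hO, ?_⟩
          rw [mem_II] at hnI
          rw [Nat.odd_iff] at hO
          set i : Fin k := ⟨(n-1)/2, by omega⟩ with hi
          have hv1 : 2*(i:ℕ)+1 = n := by simp [hi]; omega
          have hv2 : 2*(i:ℕ)+2 = n+1 := by simp [hi]; omega
          have := (hall i).mp (by rw [hv1]; exact hnA)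
          rw [hv2] at this
          intro hc
          apply this
          rw [← hint, Finset.mem_inter] at hc
          exact hc.1
      · rintro ⟨hnI, ⟨he, hA'⟩ | ⟨ho, hA'⟩⟩
        · rw [← hint, Finset.mem_inter] at hA'
          exact hA'.1
        · rw [mem_II] at hnI
          rw [Nat.odd_iff] at ho
          set i : Fin k := ⟨(n-1)/2, by omega⟩ with hi
          have hv1 : 2*(i:ℕ)+1 = n := by simp [hi]; omega
          have hv2 : 2*(i:ℕ)+2 = n+1 := by simp [hi]; omega
          have hiff := hall i
          rw [hv1, hv2] at hiff
          apply hiff.mpr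
          intro hc
          apply hA'
          rw [← hint, Finset.mem_inter, mem_EE]
          have : 1 ≤ n + 1 ∧ n + 1 ≤ 2*k := by omega
          exact ⟨hc, mem_II.mpr this, by rw [Nat.even_iff]; omega⟩
    push_neg at hpair
    obtain ⟨i, hi⟩ := hpair
    have hik := i.isLt
    have hueq : wfun hk y y (2*(i:ℕ)+1) = wfun hk y y (2*(i:ℕ)+2) := by
      rw [wfun_odd hk y y (by rw [Nat.odd_iff]; omega),
        wfun_even hk y y (by rw [Nat.even_iff]; omega), idx_odd, idx_even]
    have hne2 : 2*(i:ℕ)+1 ≠ 2*(i:ℕ)+2 := by omega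
    by_cases h1 : 2*(i:ℕ)+1 ∈ A
    · have h2 : 2*(i:ℕ)+2 ∈ A := by tauto
      rw [ddet_eq_zero_of_eq h1 h2 hne2 hueq, zero_mul]
    · have h2 : 2*(i:ℕ)+2 ∉ A := by tauto
      have hm1 : 2*(i:ℕ)+1 ∈ II k \ A :=
        Finset.mem_sdiff.mpr ⟨mem_II.mpr ⟨by omega, by omega⟩, h1⟩
      have hm2 : 2*(i:ℕ)+2 ∈ II k \ A :=
        Finset.mem_sdiff.mpr ⟨mem_II.mpr ⟨by omega, by omega⟩, h2⟩
      rw [ddet_eq_zero_of_eq hm1 hm2 hne2 hueq, mul_zero]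

noncomputable def PsiML (hk : 0 < k) (Astar : Finset ℕ) :
    MultilinearMap F (fun _ : Fin k => (Fin k → F)) F where
  toFun y := bigSum (wfun hk (fun i => Pi.single i 1) y) Astar
  map_update_add' {dec} y i a b := by
    rw [Subsingleton.elim dec (instDecidableEqFin k)]
    have hoI : 2*(i:ℕ)+2 ∈ II k := mem_II.mpr ⟨by omega, by have := i.isLt; omega⟩
    rw [bigSum_congr (fun n hn => wfun_update_y hk _ y i (a+b) hn),
        bigSum_congr (fun n hn => wfun_update_y hk _ y i a hn),
        bigSum_congr (fun n hn => wfun_update_y hk _ y i b hn),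
        bigSum_update_add hoI a b]
  map_update_smul' {dec} y i c a := by
    rw [Subsingleton.elim dec (instDecidableEqFin k)]
    have hoI : 2*(i:ℕ)+2 ∈ II k := mem_II.mpr ⟨by omega, by have := i.isLt; omega⟩
    rw [bigSum_congr (fun n hn => wfun_update_y hk _ y i (c • a) hn),
        bigSum_congr (fun n hn => wfun_update_y hk _ y i a hn),
        bigSum_update_smul hoI c a, smul_eq_mul]

theorem key3 (hk : 0 < k) (Astar : Finset ℕ) {c : Fin k → Fin k} {j1 j2 : Fin k}
    (hne : j1 ≠ j2) (hcc : c j1 = c j2) :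
    bigSum (wfun hk (fun i => Pi.single i 1)
      (fun a => Pi.single (c a) (1:F))) Astar = 0 := by
  rw [bigSum_def]
  apply Finset.sum_eq_zero
  intro A hA
  obtain ⟨hsub, hcard, hint⟩ := coll_spec hA
  set u : ℕ → Fin k → F :=
    wfun hk (fun i => Pi.single i 1) (fun a => Pi.single (c a) (1:F)) with hu
  have hj1 := j1.isLt
  have hj2 := j2.isLt
  have hγ := (c j1).isLt
  have hval : ∀ a : Fin k, u (2*(a:ℕ)+2) = Pi.single (c a) 1 := by
    intro a
    rw [hu, wfun_even hk _ _ (by rw [Nat.even_iff]; omega), idx_even]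
  have hvalo : u (2*((c j1 : ℕ))+1) = Pi.single (c j1) 1 := by
    rw [hu, wfun_odd hk _ _ (by rw [Nat.odd_iff]; omega), idx_odd]
  have h12 : u (2*(j1:ℕ)+2) = u (2*(j2:ℕ)+2) := by
    rw [hval, hval, hcc]
  have h1o : u (2*((c j1 : ℕ))+1) = u (2*(j1:ℕ)+2) := by
    rw [hval, hvalo]
  have hvne : (j1:ℕ) ≠ (j2:ℕ) := fun hh => hne (Fin.ext hh)
  have hne12 : 2*(j1:ℕ)+2 ≠ 2*(j2:ℕ)+2 := by omega
  have hm1 : 2*(j1:ℕ)+2 ∈ II k := mem_II.mpr ⟨by omega, by omega⟩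
  have hm2 : 2*(j2:ℕ)+2 ∈ II k := mem_II.mpr ⟨by omega, by omega⟩
  have hmo : 2*((c j1:ℕ))+1 ∈ II k := mem_II.mpr ⟨by omega, by omega⟩
  by_cases hA1 : 2*(j1:ℕ)+2 ∈ A
  · by_cases hA2 : 2*(j2:ℕ)+2 ∈ A
    · rw [ddet_eq_zero_of_eq hA1 hA2 hne12 h12, zero_mul]
    · by_cases hAo : 2*((c j1:ℕ))+1 ∈ A
      · rw [ddet_eq_zero_of_eq hAo hA1 (by omega) h1o, zero_mul]
      · rw [ddet_eq_zero_of_eq (Finset.mem_sdiff.mpr ⟨hmo, hAo⟩)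
          (Finset.mem_sdiff.mpr ⟨hm2, hA2⟩) (by omega) (by rw [h1o, h12]), mul_zero]
  · by_cases hA2 : 2*(j2:ℕ)+2 ∈ A
    · by_cases hAo : 2*((c j1:ℕ))+1 ∈ A
      · rw [ddet_eq_zero_of_eq hAo hA2 (by omega) (by rw [h1o, h12]), zero_mul]
      · rw [ddet_eq_zero_of_eq (Finset.mem_sdiff.mpr ⟨hmo, hAo⟩)
          (Finset.mem_sdiff.mpr ⟨hm1, hA1⟩) (by omega) h1o, mul_zero]
    · rw [ddet_eq_zero_of_eq (Finset.mem_sdiff.mpr ⟨hm1, hA1⟩)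
        (Finset.mem_sdiff.mpr ⟨hm2, hA2⟩) hne12 h12, mul_zero]

theorem key4 {c : Fin k → Fin k} (hc : Function.Injective c) :
    (Matrix.of fun a => (Pi.single (c a) 1 : Fin k → F)).det ≠ 0 := by
  classical
  set σ : Equiv.Perm (Fin k) := Equiv.ofBijective c (Finite.injective_iff_bijective.1 hc)
    with hσ
  have hmat : (Matrix.of fun a => (Pi.single (c a) 1 : Fin k → F)) = σ.permMatrix F := by
    ext a b
    simp only [Matrix.of_apply, Equiv.Perm.permMatrix, PEquiv.toMatrix_apply,
      Equiv.toPEquiv_apply, Pi.single_apply, Option.mem_def, Option.some.injEq]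
    have hσa : σ a = c a := rfl
    rw [hσa]
    by_cases h : b = c a
    · rw [if_pos h, if_pos h.symm]
    · rw [if_neg h, if_neg (fun hh => h hh.symm)]
  rw [hmat, Matrix.det_permutation]
  rcases Int.units_eq_one_or (Equiv.Perm.sign σ) with h | h <;> rw [h] <;> simp

theorem psi_eq_det {Astar : Finset ℕ} (hk : 0 < k) (hAstar : Astar ⊆ EE k)
    (y : Fin k → Fin k → F) :
    bigSum (wfun hk (fun i => Pi.single i 1) y) Astar = (Matrix.of y).det := by
  classical
  have hML : (PsiML hk Astar : MultilinearMap F (fun _ : Fin k => (Fin k → F)) F)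
      = (Matrix.detRowAlternating : (Fin k → F) [⋀^Fin k]→ₗ[F] F).toMultilinearMap := by
    apply Module.Basis.ext_multilinear (fun _ => Pi.basisFun F (Fin k))
    intro c
    have hbas : (fun i => (Pi.basisFun F (Fin k)) (c i))
        = fun a => (Pi.single (c a) 1 : Fin k → F) := by
      funext a
      exact Pi.basisFun_apply F (Fin k) (c a)
    rw [hbas]
    have hR : ((Matrix.detRowAlternating :
        (Fin k → F) [⋀^Fin k]→ₗ[F] F).toMultilinearMap)
        (fun a => (Pi.single (c a) 1 : Fin k → F))
        = (Matrix.of fun a => (Pi.single (c a) 1 : Fin k → F)).det := rfl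
    have hL : (PsiML hk Astar : MultilinearMap F (fun _ : Fin k => (Fin k → F)) F)
        (fun a => (Pi.single (c a) 1 : Fin k → F))
        = bigSum (wfun hk (fun i => Pi.single i 1)
            (fun a => Pi.single (c a) (1:F))) Astar := rfl
    rw [hR, hL]
    by_cases hc : Function.Injective c
    · have hdet := key4 (F := F) hc
      apply mul_left_cancel₀ hdet
      set y' : Fin k → Fin k → F := fun a => Pi.single (c a) 1 with hy'
      have hk1 := key1 hk hAstar y'
      rw [stage1 hk y' Astar y'] at hk1
      calc (Matrix.of y').det * bigSum (wfun hk (fun i => Pi.single i 1) y') Astar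
          = bigSum (wfun hk (fun i => Pi.single i 1) y') Astar * (Matrix.of y').det := by
            ring
        _ = (Matrix.of y').det * (Matrix.of y').det := hk1
    · obtain ⟨j1, j2, hcc, hne⟩ := Function.not_injective_iff.mp hc
      rw [key3 hk Astar hne hcc]
      symm
      apply Matrix.det_zero_of_row_eq hne
      funext b
      simp only [Matrix.of_apply]
      rw [hcc]
  have := congrFun (congrArg DFunLike.coe hML) y
  exact this

theorem ddet_OO (hk : 0 < k) (v : ℕ → Fin k → F) :
    ddet v (OO k) = (Matrix.of fun i j : Fin k => v (2*(i:ℕ)+1) j).det := by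
  have himg : OO k = Finset.image (fun i : Fin k => 2*(i:ℕ)+1) Finset.univ := by
    ext n
    rw [mem_OO, Finset.mem_image]
    constructor
    · rintro ⟨hnI, ho⟩
      rw [mem_II] at hnI
      rw [Nat.odd_iff] at ho
      exact ⟨⟨(n-1)/2, by omega⟩, Finset.mem_univ _, by simp; omega⟩
    · rintro ⟨i, -, rfl⟩
      have := i.isLt
      exact ⟨mem_II.mpr ⟨by omega, by omega⟩, by rw [Nat.odd_iff]; omega⟩
  have hmono : StrictMono (fun i : Fin k => 2*(i:ℕ)+1) := by
    intro i j hij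
    have : (i:ℕ) < (j:ℕ) := hij
    simp only
    omega
  have hcard : (OO k).card = k := by
    rw [himg, Finset.card_image_of_injective _ hmono.injective, card_univ, Fintype.card_fin]
  rw [ddet_pos hcard]
  congr 1
  have hemb : ∀ i, (OO k).orderEmbOfFin hcard i = 2*(i:ℕ)+1 := by
    intro i
    rw [← Finset.orderEmbOfFin_unique hcard
      (fun i => by rw [himg]; exact Finset.mem_image_of_mem _ (Finset.mem_univ i)) hmono]
  ext i j
  rw [Matrix.of_apply, hemb i, Matrix.of_apply]

theorem ddet_EE (hk : 0 < k) (v : ℕ → Fin k → F) :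
    ddet v (EE k) = (Matrix.of fun i j : Fin k => v (2*(i:ℕ)+2) j).det := by
  have himg : EE k = Finset.image (fun i : Fin k => 2*(i:ℕ)+2) Finset.univ := by
    ext n
    rw [mem_EE, Finset.mem_image]
    constructor
    · rintro ⟨hnI, ho⟩
      rw [mem_II] at hnI
      rw [Nat.even_iff] at ho
      exact ⟨⟨n/2-1, by omega⟩, Finset.mem_univ _, by simp; omega⟩
    · rintro ⟨i, -, rfl⟩
      have := i.isLt
      exact ⟨mem_II.mpr ⟨by omega, by omega⟩, by rw [Nat.even_iff]; omega⟩
  have hmono : StrictMono (fun i : Fin k => 2*(i:ℕ)+2) := by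
    intro i j hij
    have : (i:ℕ) < (j:ℕ) := hij
    simp only
    omega
  have hcard : (EE k).card = k := by
    rw [himg, Finset.card_image_of_injective _ hmono.injective, card_univ, Fintype.card_fin]
  rw [ddet_pos hcard]
  congr 1
  have hemb : ∀ i, (EE k).orderEmbOfFin hcard i = 2*(i:ℕ)+2 := by
    intro i
    rw [← Finset.orderEmbOfFin_unique hcard
      (fun i => by rw [himg]; exact Finset.mem_image_of_mem _ (Finset.mem_univ i)) hmono]
  ext i j
  rw [Matrix.of_apply, hemb i, Matrix.of_apply]

theorem main_result (hk : 0 < k) (v : ℕ → Fin k → F) (Astar : Finset ℕ)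
    (hAstar : Astar ⊆ EE k) :
    bigSum v Astar = ddet v (OO k) * ddet v (EE k) := by
  set x : Fin k → Fin k → F := fun i => v (2*(i:ℕ)+1) with hx
  set y : Fin k → Fin k → F := fun i => v (2*(i:ℕ)+2) with hy
  have hcongr : bigSum v Astar = bigSum (wfun hk x y) Astar := by
    apply bigSum_congr
    intro n hn
    by_cases ho : Odd n
    · rw [wfun_odd hk x y ho, hx]
      conv_lhs => rw [odd_form hk hn ho]
    · have he : Even n := Nat.even_iff.mpr (by rw [Nat.odd_iff] at ho; omega)
      rw [wfun_even hk x y he, hy]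
      conv_lhs => rw [even_form hk hn he]
  rw [hcongr, stage1 hk y Astar x, psi_eq_det hk hAstar y, ddet_OO hk v, ddet_EE hk v]
  rw [hx, hy]
  ring
end PSaux

/-- **Theorem 2 of Propp–Stanley.**  For row vectors `v 1, ..., v (2k)` in a
`k`-dimensional space over a field and any fixed subset `A* ⊆ {2,4,...,2k}`,
the sum of `‖A‖·‖B‖` over all balanced partitions `(A, B)` of `{1,...,2k}`
(here `B = {1,...,2k} \ A`) with `A ∩ {2,4,...,2k} = A*` equals
`‖{1,3,...,2k-1}‖ · ‖{2,4,...,2k}‖`. -/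
theorem sum_ddet_mul_ddet_eq {F : Type*} [Field F] {k : ℕ} (hk : 0 < k)
    (v : ℕ → Fin k → F) (Astar : Finset ℕ)
    (hAstar : Astar ⊆ (Finset.Icc 1 (2 * k)).filter (fun x => Even x)) :
    ∑ A ∈ (Finset.Icc 1 (2 * k)).powerset.filter
        (fun A => A.card = k ∧
          A ∩ ((Finset.Icc 1 (2 * k)).filter (fun x => Even x)) = Astar),
      ddet v A * ddet v (Finset.Icc 1 (2 * k) \ A)
    = ddet v ((Finset.Icc 1 (2 * k)).filter (fun x => Odd x)) *
      ddet v ((Finset.Icc 1 (2 * k)).filter (fun x => Even x)) := by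
  exact PSaux.main_result hk v Astar hAstar
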